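/- Let l>0 and let u be the vortex map on B_l. For ρ ∈ (0,l) and β ∈ (0,π), let Ω_{ρ,β} := {(r cos α, r sin α) : 0 < r < l, α ∈ [β, 2π−β]} and define v_{ρ,β} on Ω_{ρ,β} in polar coordinates by v_{ρ,β}(r,α) := (cos α, sin α) if r > ρ/2, and v_{ρ,β}(r,α) := (cos((2r/ρ)(α−π)+π), sin((2r/ρ)(α−π)+π)) if 0 ≤ r ≤ ρ/2. Then for any sequences ρ_k → 0⁺ and β_k → 0⁺, ∫_{Ω_{ρ_k,β_k}} |ℳ(∇v_{ρ_k,β_k})| dx → ∫_{B_l} √(1+|∇u|²) dx as k → ∞. -/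

import Mathlib

open MeasureTheory Filter Metric Set
open scoped ENNReal Topology Real

noncomputable section

/-- Squared Frobenius norm of the Jacobian matrix of `v` at `z`. -/
def gradSq (v : ℂ → ℂ) (z : ℂ) : ℝ :=
  ‖fderiv ℝ v z 1‖ ^ 2 + ‖fderiv ℝ v z Complex.I‖ ^ 2

/-- Jacobian determinant of `v` at `z`. -/
def jacDet (v : ℂ → ℂ) (z : ℂ) : ℝ :=
  LinearMap.det ((fderiv ℝ v z).toLinearMap)

/-- The polar angle `α(z) ∈ [0, 2π)` of a nonzero complex number. -/
def ang (z : ℂ) : ℝ :=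
  if 0 ≤ Complex.arg z then Complex.arg z else Complex.arg z + 2 * Real.pi

/-- The domain `Ω_{ρ,β} = {(r cos α, r sin α) : 0 < r < l, α ∈ [β, 2π−β]}`,
written via the principal argument as `{z ≠ 0 : |z| < l, β ≤ |arg z|}`. -/
def OmSet (l β : ℝ) : Set ℂ :=
  {z : ℂ | z ≠ 0 ∧ ‖z‖ < l ∧ β ≤ |Complex.arg z|}

/-- The map `v_{ρ,β}` (in polar coordinates): the identity retraction onto the
circle for `r > ρ/2`, interpolated towards the constant `(-1,0)` for `r ≤ ρ/2`. -/
def vMap (ρ : ℝ) (z : ℂ) : ℂ :=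
  if ρ / 2 < ‖z‖ then ‖z‖⁻¹ • z
  else Complex.exp (Complex.I * ((((2 * ‖z‖ / ρ) * (ang z - Real.pi) + Real.pi : ℝ) : ℂ)))


lemma cauchy2 (z h : ℂ) : |z.re * h.re + z.im * h.im| ≤ ‖z‖ * ‖h‖ := by
  have hz : ‖z‖ = Real.sqrt (z.re^2 + z.im^2) := by
    rw [Complex.norm_def, Complex.normSq_apply]; ring_nf
  have hh : ‖h‖ = Real.sqrt (h.re^2 + h.im^2) := by
    rw [Complex.norm_def, Complex.normSq_apply]; ring_nf
  rw [hz, hh, ← Real.sqrt_sq_eq_abs, ← Real.sqrt_mul (by positivity)]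
  apply Real.sqrt_le_sqrt
  nlinarith [sq_nonneg (z.re * h.im - z.im * h.re)]

lemma norm_sq_eq (z : ℂ) : ‖z‖^2 = z.re^2 + z.im^2 := by
  rw [Complex.sq_norm, Complex.normSq_apply]; ring

lemma norm_hasFDerivAt (z : ℂ) (hz : z ≠ 0) :
    ∃ N : ℂ →L[ℝ] ℝ, HasFDerivAt (fun w : ℂ => ‖w‖) N z ∧
      (∀ h, |N h| ≤ ‖h‖) ∧ N z = ‖z‖ ∧ (∀ h, N h = (z.re * h.re + z.im * h.im) / ‖z‖) := by
  have hre : HasFDerivAt (fun w : ℂ => w.re) Complex.reCLM z := Complex.reCLM.hasFDerivAt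
  have him : HasFDerivAt (fun w : ℂ => w.im) Complex.imCLM z := Complex.imCLM.hasFDerivAt
  have hsq : HasFDerivAt (fun w : ℂ => Complex.normSq w)
      (z.re • Complex.reCLM + z.re • Complex.reCLM + (z.im • Complex.imCLM + z.im • Complex.imCLM)) z := by
    have := (hre.mul hre).add (him.mul him)
    refine this.congr_of_eventuallyEq (Filter.Eventually.of_forall fun w => ?_)
    simp [Complex.normSq_apply]
  have h0 : Complex.normSq z ≠ 0 := by simpa [Complex.normSq_eq_zero] using hz
  have hnz : ‖z‖ ≠ 0 := norm_ne_zero_iff.mpr hz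
  have hsqrtval : Real.sqrt (Complex.normSq z) = ‖z‖ := by
    rw [Complex.norm_def]
  have hsqrt := (Real.hasDerivAt_sqrt h0).comp_hasFDerivAt z hsq
  have hfun : (fun w : ℂ => ‖w‖) = fun w : ℂ => Real.sqrt (Complex.normSq w) := by
    funext w; rw [Complex.norm_def]
  rw [hfun]
  have happ : ∀ h : ℂ, (((1:ℝ) / (2 * Real.sqrt (Complex.normSq z))) •
      (z.re • Complex.reCLM + z.re • Complex.reCLM + (z.im • Complex.imCLM + z.im • Complex.imCLM))) h
      = (z.re * h.re + z.im * h.im) / ‖z‖ := by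
    intro h
    have habs : ‖z‖ ≠ 0 := hnz
    simp [hsqrtval]
    field_simp
    ring
  refine ⟨_, hsqrt, ?_, ?_, happ⟩
  · intro h
    rw [happ, abs_div, abs_of_nonneg (norm_nonneg z), div_le_iff₀ (by positivity)]
    calc |z.re * h.re + z.im * h.im| ≤ ‖z‖ * ‖h‖ := cauchy2 z h
    _ = ‖h‖ * ‖z‖ := by ring
  · rw [happ]
    have h2 : ‖z‖ * ‖z‖ = z.re * z.re + z.im * z.im := by
      have := norm_sq_eq z; nlinarith
    rw [← h2]
    field_simp

lemma det_zero_of_kernel (T : ℂ →L[ℝ] ℂ) (h₀ : ℂ) (h0 : h₀ ≠ 0) (hT : T h₀ = 0) :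
    LinearMap.det (T.toLinearMap) = 0 := by
  have hdet : LinearMap.det (T.toLinearMap) =
      (T 1).re * (T Complex.I).im - (T Complex.I).re * (T 1).im := by
    rw [← LinearMap.det_toMatrix Complex.basisOneI, Matrix.det_fin_two]
    simp [LinearMap.toMatrix_apply, Complex.coe_basisOneI_repr, Complex.coe_basisOneI]
  have hdecomp : (0:ℂ) = h₀.re • T 1 + h₀.im • T Complex.I := by
    rw [← T.map_smul, ← T.map_smul, ← T.map_add, ← hT]
    congr 1
    simp [Complex.real_smul]
  have he1 : h₀.re * (T 1).re + h₀.im * (T Complex.I).re = 0 := by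
    have := congrArg Complex.re hdecomp; simpa using this.symm
  have he2 : h₀.re * (T 1).im + h₀.im * (T Complex.I).im = 0 := by
    have := congrArg Complex.im hdecomp; simpa using this.symm
  have hne : h₀.re ≠ 0 ∨ h₀.im ≠ 0 := by
    by_contra hcon
    push_neg at hcon
    exact h0 (Complex.ext hcon.1 hcon.2)
  rw [hdet]
  rcases hne with hre | him
  · have : h₀.re * ((T 1).re * (T Complex.I).im - (T Complex.I).re * (T 1).im) = 0 := by
      linear_combination (T Complex.I).im * he1 - (T Complex.I).re * he2
    rcases mul_eq_zero.mp this with h | h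
    · exact absurd h hre
    · exact h
  · have : h₀.im * ((T 1).re * (T Complex.I).im - (T Complex.I).re * (T 1).im) = 0 := by
      linear_combination (T 1).re * he2 - (T 1).im * he1
    rcases mul_eq_zero.mp this with h | h
    · exact absurd h him
    · exact h

lemma outer_deriv (z : ℂ) (hz : z ≠ 0) :
    ∃ D : ℂ →L[ℝ] ℂ, HasFDerivAt (fun w : ℂ => ‖w‖⁻¹ • w) D z ∧ D z = 0 ∧
      ∀ h, ‖D h‖ ≤ 2 * ‖z‖⁻¹ * ‖h‖ := by
  obtain ⟨N, hN, hNb, hNz, hNval⟩ := norm_hasFDerivAt z hz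
  have hnz : ‖z‖ ≠ 0 := norm_ne_zero_iff.mpr hz
  have habs : ‖z‖ ≠ 0 := hnz
  have hinv : HasFDerivAt (fun w : ℂ => ‖w‖⁻¹) ((-(‖z‖^2)⁻¹ : ℝ) • N) z :=
    (hasDerivAt_inv hnz).comp_hasFDerivAt z hN
  have hD := hinv.smul (hasFDerivAt_id z)
  simp only [id_eq] at hD
  refine ⟨_, hD, ?_, ?_⟩
  · have : (‖z‖⁻¹ • ContinuousLinearMap.id ℝ ℂ + (-(‖z‖^2)⁻¹ • N).smulRight z) z
        = ‖z‖⁻¹ • z + (-(‖z‖^2)⁻¹ * N z) • z := by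
      simp [ContinuousLinearMap.smulRight_apply]
    rw [this, hNz]
    rw [← add_smul]
    convert zero_smul ℝ z
    field_simp [habs]
    ring
  · intro h
    have happ : (‖z‖⁻¹ • ContinuousLinearMap.id ℝ ℂ + (-(‖z‖^2)⁻¹ • N).smulRight z) h
        = ‖z‖⁻¹ • h + (-(‖z‖^2)⁻¹ * N h) • z := by
      simp [ContinuousLinearMap.smulRight_apply]
    rw [happ]
    calc ‖‖z‖⁻¹ • h + (-(‖z‖^2)⁻¹ * N h) • z‖
        ≤ ‖‖z‖⁻¹ • h‖ + ‖(-(‖z‖^2)⁻¹ * N h) • z‖ := norm_add_le _ _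
      _ = ‖z‖⁻¹ * ‖h‖ + (‖z‖^2)⁻¹ * |N h| * ‖z‖ := by
          rw [norm_smul, norm_smul]
          simp [abs_mul, abs_of_nonneg (norm_nonneg z), abs_of_nonneg (inv_nonneg.mpr (norm_nonneg z)),
            Real.norm_eq_abs, abs_inv, abs_pow, abs_of_nonneg (sq_nonneg ‖z‖)]
      _ ≤ ‖z‖⁻¹ * ‖h‖ + (‖z‖^2)⁻¹ * ‖h‖ * ‖z‖ := by
          gcongr
          exact hNb h
      _ = 2 * ‖z‖⁻¹ * ‖h‖ := by
          field_simp
          ring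

lemma ang_sub_pi (z : ℂ) (hz : ¬(z.im = 0 ∧ 0 ≤ z.re)) :
    ang z - Real.pi = Complex.arg (-z) := by
  rcases lt_trichotomy z.im 0 with him | him | him
  · have harg : Complex.arg z < 0 := Complex.arg_neg_iff.mpr him
    rw [ang, if_neg (not_le.mpr harg), Complex.arg_neg_eq_arg_add_pi_of_im_neg him]
    ring
  · have hre : z.re < 0 := by
      rcases lt_or_ge z.re 0 with h | h
      · exact h
      · exact absurd ⟨him, h⟩ hz
    have harg : Complex.arg z = Real.pi := Complex.arg_eq_pi_iff.mpr ⟨hre, him⟩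
    have hargn : Complex.arg (-z) = 0 := by
      rw [Complex.arg_eq_zero_iff]
      constructor
      · simp only [Complex.neg_re]; linarith
      · simp [him]
    rw [ang, if_pos (by rw [harg]; exact Real.pi_pos.le), harg, hargn]
    ring
  · have harg : 0 ≤ Complex.arg z := Complex.arg_nonneg_iff.mpr him.le
    rw [ang, if_pos harg, Complex.arg_neg_eq_arg_sub_pi_of_im_pos him]


lemma inner_deriv (ρ : ℝ) (hρ : 0 < ρ) (z : ℂ) (hz : ¬(z.im = 0 ∧ 0 ≤ z.re)) :
    ∃ E : ℂ →L[ℝ] ℂ,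
      HasFDerivAt (fun w : ℂ =>
        Complex.exp (Complex.I * ((2 / ρ * (‖w‖ * Complex.arg (-w)) + Real.pi : ℝ) : ℂ))) E z ∧
      (∀ h, ‖E h‖ ≤ 2 / ρ * (Real.pi + 1) * ‖h‖) ∧ ∃ h₀ : ℂ, h₀ ≠ 0 ∧ E h₀ = 0 := by
  have hz0 : z ≠ 0 := by
    intro h; exact hz (by simp [h])
  have hnz : ‖z‖ ≠ 0 := norm_ne_zero_iff.mpr hz0
  obtain ⟨N, hN, hNb, hNz, hNval⟩ := norm_hasFDerivAt z hz0
  -- derivative of arg (-w)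
  have hslit : -z ∈ Complex.slitPlane := by
    rw [Complex.mem_slitPlane_iff]
    simp only [Complex.neg_re, Complex.neg_im]
    rcases not_and_or.mp hz with h | h
    · right; simpa using h
    · left; push_neg at h; linarith
  have hlog : HasDerivAt Complex.log (-z)⁻¹ (-z) := Complex.hasDerivAt_log hslit
  have hneg : HasDerivAt (fun w : ℂ => -w) (-1) z := (hasDerivAt_id z).neg
  have hlogneg : HasDerivAt (fun w : ℂ => Complex.log (-w)) (z⁻¹) z := by
    have := hlog.comp z hneg
    exact this.congr_deriv (by simp)
  have hlogF := (hlogneg.hasFDerivAt.restrictScalars ℝ)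
  set A : ℂ →L[ℝ] ℝ := Complex.imCLM.comp ((ContinuousLinearMap.smulRight (1 : ℂ →L[ℂ] ℂ) (z⁻¹)).restrictScalars ℝ) with hA
  have harg : HasFDerivAt (fun w : ℂ => Complex.arg (-w)) A z := by
    have h1 : HasFDerivAt (fun w : ℂ => (Complex.log (-w)).im) A z :=
      Complex.imCLM.hasFDerivAt.comp z hlogF
    apply h1.congr_of_eventuallyEq
    filter_upwards with w
    rw [Complex.log_im]
  have hAval : ∀ h : ℂ, A h = (h * z⁻¹).im := by
    intro h; simp [hA]
  have hAb : ∀ h : ℂ, |A h| ≤ ‖h‖ * ‖z‖⁻¹ := by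
    intro h
    rw [hAval]
    calc |(h * z⁻¹).im| ≤ ‖h * z⁻¹‖ := Complex.abs_im_le_norm _
      _ = ‖h‖ * ‖z‖⁻¹ := by
          rw [norm_mul, norm_inv]
  -- product and affine pieces
  have hmul : HasFDerivAt (fun w : ℂ => ‖w‖ * Complex.arg (-w)) (‖z‖ • A + Complex.arg (-z) • N) z :=
    hN.mul harg
  have hphi : HasFDerivAt (fun w : ℂ => 2 / ρ * (‖w‖ * Complex.arg (-w)) + Real.pi)
      ((2 / ρ) • (‖z‖ • A + Complex.arg (-z) • N)) z := (hmul.const_mul (2 / ρ)).add_const Real.pi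
  set Φ : ℂ →L[ℝ] ℝ := (2 / ρ) • (‖z‖ • A + Complex.arg (-z) • N) with hPhi
  have hPhib : ∀ h : ℂ, |Φ h| ≤ 2 / ρ * (Real.pi + 1) * ‖h‖ := by
    intro h
    have : Φ h = 2 / ρ * (‖z‖ * A h + Complex.arg (-z) * N h) := by simp [hPhi]; ring
    rw [this, abs_mul, abs_of_nonneg (by positivity : (0:ℝ) ≤ 2 / ρ)]
    have h1 : |‖z‖ * A h + Complex.arg (-z) * N h| ≤ (Real.pi + 1) * ‖h‖ := by
      calc |‖z‖ * A h + Complex.arg (-z) * N h|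
          ≤ |‖z‖ * A h| + |Complex.arg (-z) * N h| := abs_add_le _ _
        _ = ‖z‖ * |A h| + |Complex.arg (-z)| * |N h| := by
            rw [abs_mul, abs_mul, abs_of_nonneg (norm_nonneg z)]
        _ ≤ ‖z‖ * (‖h‖ * ‖z‖⁻¹) + Real.pi * ‖h‖ := by
            gcongr
            · exact hAb h
            · exact Complex.abs_arg_le_pi _
            · exact hNb h
        _ = (Real.pi + 1) * ‖h‖ := by
            have hzz : ‖z‖ * (‖h‖ * ‖z‖⁻¹) = ‖h‖ := by
              have habs : ‖z‖ ≠ 0 := hnz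
              field_simp
            rw [hzz]; ring
    calc 2 / ρ * |‖z‖ * A h + Complex.arg (-z) * N h| ≤ 2 / ρ * ((Real.pi + 1) * ‖h‖) := by
          gcongr
      _ = 2 / ρ * (Real.pi + 1) * ‖h‖ := by ring
  -- now build E
  have hphiC : HasFDerivAt (fun w : ℂ => ((2 / ρ * (‖w‖ * Complex.arg (-w)) + Real.pi : ℝ) : ℂ))
      (Complex.ofRealCLM.comp Φ) z := Complex.ofRealCLM.hasFDerivAt.comp z hphi
  have hmulI : HasFDerivAt (fun w : ℂ => Complex.I * ((2 / ρ * (‖w‖ * Complex.arg (-w)) + Real.pi : ℝ) : ℂ))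
      (Complex.I • (Complex.ofRealCLM.comp Φ)) z := hphiC.const_mul Complex.I
  set c : ℂ := Complex.I * ((2 / ρ * (‖z‖ * Complex.arg (-z)) + Real.pi : ℝ) : ℂ) with hc
  have hexp : HasFDerivAt Complex.exp
      (((1 : ℂ →L[ℂ] ℂ).smulRight (Complex.exp c)).restrictScalars ℝ) c :=
    (Complex.hasDerivAt_exp c).hasFDerivAt.restrictScalars ℝ
  have hE := hexp.comp z hmulI
  set E := (((1 : ℂ →L[ℂ] ℂ).smulRight (Complex.exp c)).restrictScalars ℝ).comp
      (Complex.I • (Complex.ofRealCLM.comp Φ)) with hEdef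
  have hEval : ∀ h : ℂ, E h = (Complex.I * (Φ h : ℂ)) * Complex.exp c := by
    intro h
    simp [hEdef, smul_eq_mul]
    try ring
  have hexpnorm : ‖Complex.exp c‖ = 1 := by
    rw [Complex.norm_exp, hc]
    simp
  refine ⟨E, hE, ?_, ?_⟩
  · intro h
    rw [hEval, norm_mul, hexpnorm, mul_one, norm_mul]
    simp only [Complex.norm_I, one_mul, Complex.norm_real]
    exact hPhib h
  · by_cases h1 : Φ 1 = 0
    · refine ⟨1, one_ne_zero, ?_⟩
      rw [hEval, h1]
      simp
    · refine ⟨(Φ Complex.I : ℂ) - (Φ 1 : ℝ) • Complex.I, ?_, ?_⟩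
      · intro hcon
        have := congrArg Complex.im hcon
        simp [Complex.real_smul] at this
        exact h1 this
      · have hlin : Φ ((Φ Complex.I : ℂ) - (Φ 1 : ℝ) • Complex.I) = 0 := by
          have : ((Φ Complex.I : ℝ) : ℂ) = (Φ Complex.I : ℝ) • (1 : ℂ) := by
            simp [Complex.real_smul]
          rw [this, map_sub, _root_.map_smul, _root_.map_smul]
          simp [smul_eq_mul]
          ring
        rw [hEval, hlin]
        simp

lemma integrableOn_inv_norm_ball (l : ℝ) (hl : 0 < l) :
    IntegrableOn (fun z : ℂ => ‖z‖⁻¹) (ball (0 : ℂ) l) := by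
  constructor
  · exact (measurable_norm.inv).aestronglyMeasurable
  · rw [hasFiniteIntegral_iff_norm]
    set S : ℕ → Set ℂ := fun n => ball (0 : ℂ) (l / 2 ^ n) \ ball (0 : ℂ) (l / 2 ^ (n + 1)) with hS
    have hcover : ball (0 : ℂ) l ⊆ {0} ∪ ⋃ n, S n := by
      intro z hz
      rcases eq_or_ne z 0 with rfl | hz0
      · exact Or.inl rfl
      right
      have hzpos : 0 < ‖z‖ := norm_pos_iff.mpr hz0
      have hex : ∃ n : ℕ, l / 2 ^ (n + 1) ≤ ‖z‖ := by
        obtain ⟨n, hn⟩ := pow_unbounded_of_one_lt (l / ‖z‖) (by norm_num : (1:ℝ) < 2)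
        refine ⟨n, ?_⟩
        apply le_of_lt
        rw [div_lt_iff₀ (by positivity)]
        rw [div_lt_iff₀ hzpos] at hn
        calc l < 2 ^ n * ‖z‖ := hn
          _ ≤ ‖z‖ * 2 ^ (n + 1) := by
              rw [pow_succ]
              nlinarith [pow_pos (by norm_num : (0:ℝ) < 2) n, hzpos]
      refine mem_iUnion.mpr ⟨Nat.find hex, ?_, ?_⟩
      · simp only [mem_ball, dist_zero_right]
        rcases Nat.eq_zero_or_pos (Nat.find hex) with h0 | hpos
        · rw [h0]; simpa using mem_ball_zero_iff.mp hz
        · obtain ⟨m, hm⟩ := Nat.exists_eq_succ_of_ne_zero hpos.ne'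
          have hmin := Nat.find_min hex (by omega : m < Nat.find hex)
          push_neg at hmin
          rw [hm]
          exact hmin
      · simp only [mem_ball, dist_zero_right, not_lt]
        exact Nat.find_spec hex
    have hmS : ∀ n, MeasurableSet (S n) := fun n => measurableSet_ball.diff measurableSet_ball
    calc ∫⁻ z in ball (0 : ℂ) l, ENNReal.ofReal ‖(‖z‖⁻¹)‖ ∂volume
        ≤ ∫⁻ z in ({0} ∪ ⋃ n, S n), ENNReal.ofReal ‖(‖z‖⁻¹)‖ ∂volume := lintegral_mono_set hcover
      _ ≤ (∫⁻ z in ({(0:ℂ)} : Set ℂ), ENNReal.ofReal ‖(‖z‖⁻¹)‖ ∂volume)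
            + ∫⁻ z in (⋃ n, S n), ENNReal.ofReal ‖(‖z‖⁻¹)‖ ∂volume :=
          lintegral_union_le _ _ _
      _ ≤ 0 + ∑' n, ∫⁻ z in S n, ENNReal.ofReal ‖(‖z‖⁻¹)‖ ∂volume := by
          gcongr
          · have h0 : volume ({(0:ℂ)} : Set ℂ) = 0 := measure_singleton 0
            rw [setLIntegral_measure_zero _ _ h0]
          · exact lintegral_iUnion_le _ _
      _ < ⊤ := by
          rw [zero_add]
          have hterm : ∀ n : ℕ, (∫⁻ z in S n, ENNReal.ofReal ‖(‖z‖⁻¹)‖ ∂volume)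
              ≤ ENNReal.ofReal (2 * Real.pi * l) * (ENNReal.ofReal (1/2)) ^ n := by
            intro n
            have hb : ∀ z ∈ S n, ENNReal.ofReal ‖(‖z‖⁻¹)‖ ≤ ENNReal.ofReal (2 ^ (n+1) / l) := by
              intro z hzS
              have h1 : l / 2 ^ (n + 1) ≤ ‖z‖ := by
                have h2 := hzS.2
                simpa [mem_ball, dist_zero_right] using h2
              have hzpos : 0 < ‖z‖ := lt_of_lt_of_le (by positivity) h1
              have h2 : ‖z‖⁻¹ ≤ 2 ^ (n+1) / l := by
                rw [inv_le_comm₀ hzpos (by positivity), inv_div]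
                exact h1
              apply ENNReal.ofReal_le_ofReal
              rw [Real.norm_eq_abs, abs_of_nonneg (inv_nonneg.mpr (norm_nonneg z))]
              exact h2
            calc ∫⁻ z in S n, ENNReal.ofReal ‖(‖z‖⁻¹)‖ ∂volume
                ≤ ∫⁻ _ in S n, ENNReal.ofReal (2 ^ (n+1) / l) ∂volume :=
                  setLIntegral_mono' (hmS n) hb
              _ = ENNReal.ofReal (2 ^ (n+1) / l) * volume (S n) := by
                  rw [setLIntegral_const]
              _ ≤ ENNReal.ofReal (2 ^ (n+1) / l) * volume (ball (0:ℂ) (l / 2 ^ n)) := by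
                  gcongr
                  exact diff_subset
              _ = ENNReal.ofReal (2 * Real.pi * l) * (ENNReal.ofReal (1/2)) ^ n := by
                  rw [Complex.volume_ball]
                  rw [← ENNReal.ofReal_pow (by positivity), ← ENNReal.ofReal_pow (by norm_num),
                    ← ENNReal.ofReal_coe_nnreal]
                  rw [← ENNReal.ofReal_mul (by positivity), ← ENNReal.ofReal_mul (by positivity),
                    ← ENNReal.ofReal_mul (by positivity)]
                  congr 1
                  rw [NNReal.coe_real_pi]
                  simp only [div_pow, one_pow, pow_succ]
                  field_simp
          calc (∑' n, ∫⁻ z in S n, ENNReal.ofReal ‖(‖z‖⁻¹)‖ ∂volume)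
              ≤ ∑' n, ENNReal.ofReal (2 * Real.pi * l) * (ENNReal.ofReal (1/2)) ^ n :=
                ENNReal.tsum_le_tsum hterm
            _ = ENNReal.ofReal (2 * Real.pi * l) * ∑' n, (ENNReal.ofReal (1/2)) ^ n :=
                ENNReal.tsum_mul_left
            _ < ⊤ := by
                apply ENNReal.mul_lt_top ENNReal.ofReal_lt_top
                rw [ENNReal.tsum_geometric]
                apply ENNReal.inv_lt_top.mpr
                rw [tsub_pos_iff_lt]
                exact ENNReal.ofReal_lt_one.mpr (by norm_num)

lemma outer_facts (u : ℂ → ℂ) (hu : ∀ z : ℂ, z ≠ 0 → u z = ‖z‖⁻¹ • z)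
    (ρ : ℝ) (hρ : 0 < ρ) (z : ℂ) (hz : ρ / 2 < ‖z‖) :
    gradSq (vMap ρ) z = gradSq u z ∧ jacDet (vMap ρ) z = 0 ∧
      gradSq u z ≤ 8 * (‖z‖⁻¹) ^ 2 := by
  have hz0 : z ≠ 0 := by
    intro h; rw [h] at hz; simp at hz; linarith
  obtain ⟨D, hD, hDz, hDb⟩ := outer_deriv z hz0
  have hopen : IsOpen {w : ℂ | ρ / 2 < ‖w‖} := isOpen_lt continuous_const continuous_norm
  have hvw : vMap ρ =ᶠ[𝓝 z] fun w => ‖w‖⁻¹ • w := by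
    filter_upwards [hopen.mem_nhds hz] with w hw
    rw [vMap, if_pos hw]
  have huw : u =ᶠ[𝓝 z] fun w => ‖w‖⁻¹ • w := by
    filter_upwards [isOpen_compl_singleton.mem_nhds hz0] with w hw
    exact hu w hw
  have hDv : HasFDerivAt (vMap ρ) D z := hD.congr_of_eventuallyEq hvw
  have hDu : HasFDerivAt u D z := hD.congr_of_eventuallyEq huw
  refine ⟨?_, ?_, ?_⟩
  · rw [gradSq, gradSq, hDv.fderiv, hDu.fderiv]
  · rw [jacDet, hDv.fderiv]
    exact det_zero_of_kernel D z hz0 hDz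
  · rw [gradSq, hDu.fderiv]
    have h1 := hDb 1
    have h2 := hDb Complex.I
    rw [norm_one, mul_one] at h1
    rw [Complex.norm_I, mul_one] at h2
    have hn1 := norm_nonneg (D 1)
    have hn2 := norm_nonneg (D Complex.I)
    nlinarith [inv_nonneg.mpr (norm_nonneg z)]

lemma inner_facts (ρ : ℝ) (hρ : 0 < ρ) (z : ℂ) (hz : ¬(z.im = 0 ∧ 0 ≤ z.re))
    (hlt : ‖z‖ < ρ / 2) :
    gradSq (vMap ρ) z ≤ 8 * (Real.pi + 1) ^ 2 / ρ ^ 2 ∧ jacDet (vMap ρ) z = 0 := by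
  obtain ⟨E, hE, hEb, h₀, h₀0, hEh₀⟩ := inner_deriv ρ hρ z hz
  have hopen : IsOpen (ball (0:ℂ) (ρ/2) ∩ {w : ℂ | w.im = 0 ∧ 0 ≤ w.re}ᶜ) := by
    apply isOpen_ball.inter
    rw [isOpen_compl_iff]
    exact (isClosed_eq Complex.continuous_im continuous_const).inter
      (isClosed_le continuous_const Complex.continuous_re)
  have hmem : z ∈ ball (0:ℂ) (ρ/2) ∩ {w : ℂ | w.im = 0 ∧ 0 ≤ w.re}ᶜ :=
    ⟨by simpa [mem_ball, dist_zero_right] using hlt, hz⟩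
  have hvw : vMap ρ =ᶠ[𝓝 z]
      fun w => Complex.exp (Complex.I * ((2 / ρ * (‖w‖ * Complex.arg (-w)) + Real.pi : ℝ) : ℂ)) := by
    filter_upwards [hopen.mem_nhds hmem] with w hw
    obtain ⟨hw1, hw2⟩ := hw
    rw [mem_ball, dist_zero_right] at hw1
    rw [vMap, if_neg (by linarith)]
    congr 2
    push_cast
    rw [← ang_sub_pi w hw2]
    push_cast
    ring
  have hEv : HasFDerivAt (vMap ρ) E z := hE.congr_of_eventuallyEq hvw
  constructor
  · rw [gradSq, hEv.fderiv]
    have h1 := hEb 1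
    have h2 := hEb Complex.I
    rw [norm_one, mul_one] at h1
    rw [Complex.norm_I, mul_one] at h2
    have hn1 := norm_nonneg (E 1)
    have hn2 := norm_nonneg (E Complex.I)
    have hρ2 : (0:ℝ) < ρ^2 := by positivity
    have key : 8 * (Real.pi + 1) ^ 2 / ρ ^ 2 = 2 * (2 / ρ * (Real.pi + 1))^2 := by
      field_simp; ring
    rw [key]
    nlinarith [Real.pi_pos]
  · rw [jacDet, hEv.fderiv]
    exact det_zero_of_kernel E h₀ h₀0 hEh₀

lemma im_zero_null : volume {w : ℂ | w.im = 0} = 0 := by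
  have h : {w : ℂ | w.im = 0} = (LinearMap.ker Complex.imLm : Submodule ℝ ℂ) := by
    ext w; simp [LinearMap.mem_ker]
  rw [h]
  apply Measure.addHaar_submodule
  intro htop
  have : Complex.I ∈ LinearMap.ker Complex.imLm := htop ▸ Submodule.mem_top
  simp [LinearMap.mem_ker] at this

lemma measurable_sqrt_term (v : ℂ → ℂ) :
    Measurable (fun z => Real.sqrt (1 + gradSq v z + jacDet v z ^ 2)) := by
  have h1 : Measurable (gradSq v) := by
    apply Measurable.add
    · exact ((measurable_fderiv_apply_const ℝ v (1:ℂ)).norm).pow_const 2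
    · exact ((measurable_fderiv_apply_const ℝ v Complex.I).norm).pow_const 2
  have h2 : Measurable (jacDet v) := by
    have hc : Continuous fun L : ℂ →L[ℝ] ℂ => LinearMap.det (L.toLinearMap) :=
      ContinuousLinearMap.continuous_det
    exact hc.measurable.comp (measurable_fderiv ℝ v)
  exact Real.continuous_sqrt.measurable.comp
    ((measurable_const.add h1).add (h2.pow_const 2))

lemma omSet_measurable (l β : ℝ) : MeasurableSet (OmSet l β) := by
  apply MeasurableSet.inter
  · exact (measurableSet_singleton (0:ℂ)).compl
  apply MeasurableSet.inter
  · exact measurableSet_lt measurable_norm measurable_const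
  · exact measurableSet_le measurable_const Complex.measurable_arg.abs

theorem area_vMap_tendsto_area_vortex
    (l : ℝ) (hl : 0 < l) (u : ℂ → ℂ)
    (hu : ∀ z : ℂ, z ≠ 0 → u z = ‖z‖⁻¹ • z)
    (ρs βs : ℕ → ℝ)
    (hρ : ∀ k, ρs k ∈ Ioo (0 : ℝ) l) (hβ : ∀ k, βs k ∈ Ioo (0 : ℝ) Real.pi)
    (hρ0 : Tendsto ρs atTop (nhds 0)) (hβ0 : Tendsto βs atTop (nhds 0)) :
    Tendsto (fun k => ∫ z in OmSet l (βs k),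
        Real.sqrt (1 + gradSq (vMap (ρs k)) z + jacDet (vMap (ρs k)) z ^ 2))
      atTop
      (nhds (∫ z in ball (0 : ℂ) l, Real.sqrt (1 + gradSq u z))) := by
  classical
  set C : ℝ := Real.sqrt 8 * (Real.pi + 1) with hC
  have h8 : Real.sqrt 8 ^ 2 = 8 := Real.sq_sqrt (by norm_num)
  have h8nn : 0 ≤ Real.sqrt 8 := Real.sqrt_nonneg 8
  have hC0 : 0 ≤ C := by positivity
  set bound : ℂ → ℝ := (ball (0:ℂ) l).indicator (fun z => 1 + C * ‖z‖⁻¹) with hbound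
  set F : ℕ → ℂ → ℝ := fun k => (OmSet l (βs k)).indicator
      (fun z => Real.sqrt (1 + gradSq (vMap (ρs k)) z + jacDet (vMap (ρs k)) z ^ 2)) with hF
  set f : ℂ → ℝ := (ball (0:ℂ) l).indicator (fun z => Real.sqrt (1 + gradSq u z)) with hf
  -- rewrite the goal through indicators
  have hgoal1 : ∀ k, (∫ z in OmSet l (βs k),
      Real.sqrt (1 + gradSq (vMap (ρs k)) z + jacDet (vMap (ρs k)) z ^ 2)) = ∫ z, F k z := by
    intro k
    rw [hF]
    exact (integral_indicator (omSet_measurable l (βs k))).symm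
  have hgoal2 : (∫ z in ball (0:ℂ) l, Real.sqrt (1 + gradSq u z)) = ∫ z, f z :=
    (integral_indicator measurableSet_ball).symm
  simp only [hgoal1, hgoal2]
  -- dominated convergence
  apply tendsto_integral_of_dominated_convergence bound
  · -- measurability
    intro k
    exact ((measurable_sqrt_term (vMap (ρs k))).indicator (omSet_measurable l (βs k))).aestronglyMeasurable
  · -- bound integrable
    rw [hbound, integrable_indicator_iff measurableSet_ball]
    exact (integrableOn_const measure_ball_lt_top.ne).add
      ((integrableOn_inv_norm_ball l hl).const_mul C)
  · -- a.e. bound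
    intro k
    have hnull : volume ({w : ℂ | w.im = 0} ∪ sphere (0:ℂ) (ρs k / 2)) = 0 :=
      measure_union_null im_zero_null (Measure.addHaar_sphere volume 0 _)
    filter_upwards [measure_eq_zero_iff_ae_notMem.mp hnull] with z hzgood
    have hzim : z.im ≠ 0 := fun h => hzgood (Or.inl h)
    have hzsph : ‖z‖ ≠ ρs k / 2 := by
      intro h
      exact hzgood (Or.inr (by simpa [mem_sphere, dist_zero_right] using h))
    have hz0 : z ≠ 0 := fun h => hzim (by rw [h]; rfl)
    have hznorm : 0 < ‖z‖ := norm_pos_iff.mpr hz0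
    by_cases hzmem : z ∈ OmSet l (βs k)
    · simp only [hF]
      rw [indicator_of_mem hzmem]
      have hzball : z ∈ ball (0:ℂ) l := by
        rw [mem_ball, dist_zero_right]; exact hzmem.2.1
      rw [hbound, indicator_of_mem hzball]
      have hsq_nonneg : (0:ℝ) ≤ Real.sqrt (1 + gradSq (vMap (ρs k)) z + jacDet (vMap (ρs k)) z ^ 2) :=
        Real.sqrt_nonneg _
      rw [Real.norm_eq_abs, abs_of_nonneg hsq_nonneg]
      rcases lt_or_gt_of_ne hzsph with hlt | hgt
      · -- inner region
        obtain ⟨hgrad, hdet⟩ := inner_facts (ρs k) (hρ k).1 z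
          (fun hax => hzim hax.1) hlt
        rw [hdet]
        have hρk : 0 < ρs k := (hρ k).1
        have hbig : 1 + gradSq (vMap (ρs k)) z + (0:ℝ)^2 ≤ (1 + C / ρs k)^2 := by
          have hCsq : C^2 = 8 * (Real.pi + 1)^2 := by
            rw [hC, mul_pow, h8]
          have hCpos : 0 ≤ C / ρs k := by positivity
          have : gradSq (vMap (ρs k)) z ≤ 8 * (Real.pi + 1)^2 / ρs k ^2 := hgrad
          have hexp : (1 + C / ρs k)^2 = 1 + 2*(C/ρs k) + C^2/ρs k^2 := by field_simp; ring
          rw [hexp, hCsq]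
          nlinarith
        calc Real.sqrt (1 + gradSq (vMap (ρs k)) z + (0:ℝ)^2)
            ≤ Real.sqrt ((1 + C / ρs k)^2) := Real.sqrt_le_sqrt hbig
          _ = 1 + C / ρs k := Real.sqrt_sq (by positivity)
          _ ≤ 1 + C * ‖z‖⁻¹ := by
              have h1 : ‖z‖ ≤ ρs k := by
                have := hlt; linarith
              have h2 : (ρs k)⁻¹ ≤ ‖z‖⁻¹ := by
                apply inv_anti₀ hznorm h1
              have : C / ρs k = C * (ρs k)⁻¹ := div_eq_mul_inv C _
              rw [this]
              gcongr
      · -- outer region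
        obtain ⟨hgrad, hdet, hbd⟩ := outer_facts u hu (ρs k) (hρ k).1 z hgt
        rw [hdet, hgrad]
        have hbig : 1 + gradSq u z + (0:ℝ)^2 ≤ (1 + Real.sqrt 8 * ‖z‖⁻¹)^2 := by
          have hinv : (0:ℝ) ≤ ‖z‖⁻¹ := by positivity
          nlinarith
        calc Real.sqrt (1 + gradSq u z + (0:ℝ)^2)
            ≤ Real.sqrt ((1 + Real.sqrt 8 * ‖z‖⁻¹)^2) := Real.sqrt_le_sqrt hbig
          _ = 1 + Real.sqrt 8 * ‖z‖⁻¹ := Real.sqrt_sq (by positivity)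
          _ ≤ 1 + C * ‖z‖⁻¹ := by
              gcongr
              rw [hC]
              nlinarith [Real.pi_pos]
    · simp only [hF]
      rw [indicator_of_notMem hzmem, norm_zero, hbound]
      rcases (em (z ∈ ball (0:ℂ) l)) with hb | hb
      · rw [indicator_of_mem hb]
        positivity
      · rw [indicator_of_notMem hb]
  · -- a.e. convergence
    have hnull : volume ({w : ℂ | w.im = 0} ∪ sphere (0:ℂ) l) = 0 :=
      measure_union_null im_zero_null (Measure.addHaar_sphere volume 0 _)
    filter_upwards [measure_eq_zero_iff_ae_notMem.mp hnull] with z hzgood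
    have hzim : z.im ≠ 0 := fun h => hzgood (Or.inl h)
    have hz0 : z ≠ 0 := fun h => hzim (by rw [h]; rfl)
    have hznorm : 0 < ‖z‖ := norm_pos_iff.mpr hz0
    have hzsph : ‖z‖ ≠ l := by
      intro h
      exact hzgood (Or.inr (by simpa [mem_sphere, dist_zero_right] using h))
    rcases lt_or_gt_of_ne hzsph with hzl | hzl
    · -- inside the ball
      have hargne : Complex.arg z ≠ 0 := by
        intro h
        exact hzim (Complex.arg_eq_zero_iff.mp h).2
      have hargpos : 0 < |Complex.arg z| := abs_pos.mpr hargne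
      have hev : ∀ᶠ k in atTop, F k z = f z := by
        filter_upwards [hρ0.eventually_lt_const hznorm, hβ0.eventually_lt_const hargpos]
          with k hk1 hk2
        have hρk : 0 < ρs k := (hρ k).1
        have hout : ρs k / 2 < ‖z‖ := by linarith
        have hzmem : z ∈ OmSet l (βs k) := ⟨hz0, hzl, hk2.le⟩
        simp only [hF, hf]
        rw [indicator_of_mem hzmem,
          indicator_of_mem (by rw [mem_ball, dist_zero_right]; exact hzl)]
        obtain ⟨hgrad, hdet, _⟩ := outer_facts u hu (ρs k) hρk z hout
        rw [hgrad, hdet]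
        norm_num
      exact Tendsto.congr' (Filter.EventuallyEq.symm hev) tendsto_const_nhds
    · -- outside the ball
      have hev : ∀ k, F k z = f z := by
        intro k
        have h1 : z ∉ OmSet l (βs k) := by
          intro hmem
          exact absurd hmem.2.1 (by linarith)
        have h2 : z ∉ ball (0:ℂ) l := by
          rw [mem_ball, dist_zero_right]; linarith
        simp only [hF, hf]
        rw [indicator_of_notMem h1, indicator_of_notMem h2]
      simp only [hev]
      exact tendsto_const_nhds
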